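/- Let E : ℝ^N → ℝ be convex and differentiable, ρ : ℝ^N → (0,∞) componentwise positive weights, τ > 0, r > 0, and let x^{n+1} minimize J(x) = ((1+2r)/(2τ(1+r)))·Σᵢ ρᵢ (xᵢ - x̂ᵢ)² + E(x) + (τ/2)·Q(x - xⁿ) over ℝ^N, where Q is a positive semidefinite quadratic form and x̂ = ((1+r)²/(1+2r))·xⁿ - (r²/(1+2r))·x^{n-1}. If additionally 0 < r ≤ r_max ≤ (3+√17)/2 with r = τ_{n+1}/τ_n, then E(x^{n+1}) + (r_max/(2τ_{n+1}(1+r_max)))·Σᵢ ρᵢ (x^{n+1}ᵢ - xⁿᵢ)² ≤ E(xⁿ) + (r_max/(2τ_n(1+r_max)))·Σᵢ ρᵢ (xⁿᵢ - x^{n-1}ᵢ)². -/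

import Mathlib

open scoped BigOperators
open Matrix

private lemma quadNN (P B α t u : ℝ) (hP : 0 < P) (hD : B^2 ≤ P*α) :
    0 ≤ P*t^2 - 2*B*(t*u) + α*u^2 := by
  nlinarith [sq_nonneg (P*t - B*u), mul_nonneg (sub_nonneg.2 hD) (sq_nonneg u)]

private lemma discrIneq (r R τ : ℝ) (hr : 0 < r) (hτ : 0 < τ) (hrR : r ≤ R)
    (hR2 : R^2 ≤ 3*R + 2) :
    (r^2/(2*τ*(1+r)))^2 ≤ (2*((1+2*r)/(2*τ*(1+r))) - R/(2*τ*(1+R)))*(r*R/(2*τ*(1+R))) := by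
  have hRpos : 0 < R := lt_of_lt_of_le hr hrR
  have h1r : (0:ℝ) < 1 + r := by linarith
  have h1R : (0:ℝ) < 1 + R := by linarith
  have hG : r^3*(1+R)^2 ≤ 2*R*(1+R)*(1+2*r)*(1+r) - R^2*(1+r)^2 := by
    have h1 : 0 ≤ (R - r) * (2 + R + 4*r + 5*r*R + 3*r^2 + 5*r^2*R) := by
      apply mul_nonneg (by linarith); positivity
    have h2 : 0 ≤ r*(1+r)^2*(3*R+2-R^2) := by
      apply mul_nonneg (by positivity); linarith
    nlinarith [h1, h2]
  rw [← sub_nonneg]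
  have key : (2*((1+2*r)/(2*τ*(1+r))) - R/(2*τ*(1+R)))*(r*R/(2*τ*(1+R))) - (r^2/(2*τ*(1+r)))^2
      = (2*R*(1+R)*(1+2*r)*(1+r) - R^2*(1+r)^2 - r^3*(1+R)^2) * r / (4*τ^2*(1+r)^2*(1+R)^2) := by
    field_simp
    ring
  rw [key]
  apply div_nonneg _ (by positivity)
  apply mul_nonneg _ hr.le
  linarith

set_option maxHeartbeats 1000000 in
theorem stmt18 {N : ℕ} (E : (Fin N → ℝ) → ℝ)
    (hEconv : ConvexOn ℝ Set.univ E) (hEdiff : Differentiable ℝ E)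
    (ρ : Fin N → ℝ) (hρ : ∀ i, 0 < ρ i)
    (A : Matrix (Fin N) (Fin N) ℝ) (hA : A.PosSemidef)
    (τn τn1 rmax : ℝ) (hτn : 0 < τn) (hτn1 : 0 < τn1)
    (hr : τn1 / τn ≤ rmax) (hrmax : rmax ≤ (3 + Real.sqrt 17)/2)
    (xm xn x1 : Fin N → ℝ)
    (hmin : ∀ y : Fin N → ℝ,
      (let r := τn1 / τn
       let xhat := fun i => ((1+r)^2/(1+2*r)) * xn i - (r^2/(1+2*r)) * xm i
       let J := fun x : Fin N → ℝ =>
         ((1+2*r)/(2*τn1*(1+r))) * ∑ i, ρ i * (x i - xhat i)^2 + E x +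
           (τn1/2) * ((x - xn) ⬝ᵥ A.mulVec (x - xn))
       J x1 ≤ J y)) :
    E x1 + (rmax/(2*τn1*(1+rmax))) * ∑ i, ρ i * (x1 i - xn i)^2 ≤
      E xn + (rmax/(2*τn*(1+rmax))) * ∑ i, ρ i * (xn i - xm i)^2 := by
  set r := τn1 / τn with hrdef
  have hrpos : 0 < r := div_pos hτn1 hτn
  have hRpos : 0 < rmax := lt_of_lt_of_le hrpos hr
  have h12r : (0:ℝ) < 1 + 2*r := by linarith
  have h1r : (0:ℝ) < 1 + r := by linarith
  have h1R : (0:ℝ) < 1 + rmax := by linarith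
  have hτrel : τn = τn1 / r := by
    rw [hrdef]; field_simp
  -- abbreviations
  set s : ℝ := r^2/(1+2*r) with hsdef
  set C : ℝ := (1+2*r)/(2*τn1*(1+r)) with hCdef
  set α1 : ℝ := rmax/(2*τn1*(1+rmax)) with hα1def
  set α0 : ℝ := rmax/(2*τn*(1+rmax)) with hα0def
  have hCpos : 0 < C := by rw [hCdef]; positivity
  set xhat : Fin N → ℝ := fun i => ((1+r)^2/(1+2*r)) * xn i - (r^2/(1+2*r)) * xm i with hxhatdef
  have hxhat : ∀ i, x1 i - xhat i = (x1 i - xn i) - s * (xn i - xm i) := by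
    intro i
    rw [hxhatdef, hsdef]
    field_simp
    ring
  set SA : ℝ := ∑ i, ρ i * (x1 i - xn i)^2 with hSAdef
  set SB : ℝ := ∑ i, ρ i * (xn i - xm i)^2 with hSBdef
  set SAB : ℝ := ∑ i, ρ i * ((x1 i - xn i) * (xn i - xm i)) with hSABdef
  set S1 : ℝ := ∑ i, ρ i * ((x1 i - xn i) - s * (xn i - xm i))^2 with hS1def
  have hSA0 : 0 ≤ SA := Finset.sum_nonneg fun i _ => mul_nonneg (hρ i).le (sq_nonneg _)
  -- quadratic form value
  set q1 : ℝ := (x1 - xn) ⬝ᵥ A.mulVec (x1 - xn) with hq1def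
  have hq1nn : 0 ≤ q1 := by rw [hq1def]; simpa using hA.dotProduct_mulVec_nonneg (x1 - xn)
  -- Step A : variational inequality
  have keyA : E x1 ≤ E xn + C * (2*s*SAB - 2*SA) := by
    refine le_of_forall_pos_le_add fun ε hε => ?_
    set θ : ℝ := min 1 (ε/(C*SA+1)) with hθdef
    have hCSA : (0:ℝ) < C*SA + 1 := by nlinarith
    have hθ0 : 0 < θ := lt_min one_pos (div_pos hε hCSA)
    have hθ1 : θ ≤ 1 := min_le_left _ _
    have hθε : θ*(C*SA) ≤ ε := by
      have h1 : θ ≤ ε/(C*SA+1) := min_le_right _ _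
      have h2 : θ*(C*SA) ≤ (ε/(C*SA+1))*(C*SA) :=
        mul_le_mul_of_nonneg_right h1 (mul_nonneg hCpos.le hSA0)
      calc θ*(C*SA) ≤ (ε/(C*SA+1))*(C*SA) := h2
        _ ≤ ε := by rw [div_mul_eq_mul_div, div_le_iff₀ hCSA]; nlinarith
    set z : Fin N → ℝ := fun i => x1 i - θ * (x1 i - xn i) with hzdef
    have hJ : C * (∑ i, ρ i * (x1 i - xhat i)^2) + E x1 + (τn1/2) * q1 ≤
        C * (∑ i, ρ i * (z i - xhat i)^2) + E z +
          (τn1/2) * ((z - xn) ⬝ᵥ A.mulVec (z - xn)) := hmin z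
    -- quadratic form for z
    have hzxn : z - xn = (1-θ) • (x1 - xn) := by
      funext i
      simp [hzdef, Pi.smul_apply, smul_eq_mul]
      ring
    have hqz : (z - xn) ⬝ᵥ A.mulVec (z - xn) = (1-θ)^2 * q1 := by
      rw [hzxn, Matrix.mulVec_smul, dotProduct_smul, smul_dotProduct, hq1def]
      simp [smul_eq_mul]; ring
    -- sums
    have hS1' : (∑ i, ρ i * (x1 i - xhat i)^2) = S1 := by
      rw [hS1def]
      exact Finset.sum_congr rfl fun i _ => by rw [hxhat i]
    have hS2' : (∑ i, ρ i * (z i - xhat i)^2)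
        = S1 - (2*θ - θ^2)*SA + (2*θ*s)*SAB := by
      have hper : ∀ i, ρ i * (z i - xhat i)^2
          = ρ i * ((x1 i - xn i) - s * (xn i - xm i))^2
            - (2*θ - θ^2) * (ρ i * (x1 i - xn i)^2)
            + (2*θ*s) * (ρ i * ((x1 i - xn i) * (xn i - xm i))) := by
        intro i
        have hz : z i - xhat i = (x1 i - xhat i) - θ * (x1 i - xn i) := by
          simp [hzdef]; ring
        rw [hz, hxhat i]; ring
      rw [Finset.sum_congr rfl fun i _ => hper i, Finset.sum_add_distrib,
        Finset.sum_sub_distrib, ← Finset.mul_sum, ← Finset.mul_sum,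
        hS1def, hSAdef, hSABdef]
    -- convexity
    have hEz : E z ≤ (1-θ) * E x1 + θ * E xn := by
      have hz : z = (1-θ) • x1 + θ • xn := by
        funext i; simp [hzdef, Pi.smul_apply, smul_eq_mul]; ring
      rw [hz]
      exact hEconv.2 (Set.mem_univ x1) (Set.mem_univ xn) (by linarith) hθ0.le (by ring)
    rw [hS1', hS2', hqz] at hJ
    -- conclude by dividing by θ
    have hstep : θ * (E x1) ≤ θ * (E xn + C * (2*s*SAB - 2*SA) + ε) := by
      have hq1θ : 0 ≤ (τn1/2) * q1 * (θ*(2-θ)) := by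
        apply mul_nonneg (mul_nonneg (by linarith) hq1nn)
        nlinarith
      have hθε2 : θ*(θ*(C*SA)) ≤ θ*ε := mul_le_mul_of_nonneg_left hθε hθ0.le
      nlinarith [hJ, hEz, hq1θ, hθε2]
    exact le_of_mul_le_mul_left hstep hθ0
  -- Step B : discriminant inequality
  have hsq17 : (Real.sqrt 17)^2 = 17 := Real.sq_sqrt (by norm_num)
  have hsq0 : (0:ℝ) ≤ Real.sqrt 17 := Real.sqrt_nonneg 17
  have hq4 : (4:ℝ) ≤ Real.sqrt 17 := by nlinarith [sq_nonneg (Real.sqrt 17 - 4)]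
  have hR2 : rmax^2 ≤ 3*rmax + 2 := by
    nlinarith [mul_nonneg (by linarith : (0:ℝ) ≤ (3+Real.sqrt 17)/2 - rmax)
      (by linarith : (0:ℝ) ≤ rmax - (3-Real.sqrt 17)/2)]
  have hP : 0 < 2*C - α1 := by
    have hα1lt : α1 < C := by
      rw [hCdef, hα1def, div_lt_div_iff₀ (by positivity) (by positivity)]
      nlinarith [mul_pos hτn1 (mul_pos hrpos hRpos), mul_pos hτn1 hrpos, mul_pos hτn1 hRpos, hτn1]
    linarith
  have hα0v : α0 = r*rmax/(2*τn1*(1+rmax)) := by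
    rw [hα0def, hτrel]
    field_simp
  have hCs : C*s = r^2/(2*τn1*(1+r)) := by
    rw [hCdef, hsdef]
    field_simp
  have hD : (C*s)^2 ≤ (2*C - α1)*α0 := by
    rw [hCs, hα0v, hCdef, hα1def]
    exact discrIneq r rmax τn1 hrpos hτn1 hr hR2
  -- per-component quadratic nonnegativity
  have hquad : 0 ≤ (2*C - α1)*SA - 2*(C*s)*SAB + α0*SB := by
    have heq : (2*C - α1)*SA - 2*(C*s)*SAB + α0*SB
        = ∑ i, ρ i * ((2*C - α1)*(x1 i - xn i)^2
            - 2*(C*s)*((x1 i - xn i)*(xn i - xm i)) + α0*(xn i - xm i)^2) := by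
      rw [hSAdef, hSBdef, hSABdef, Finset.mul_sum, Finset.mul_sum, Finset.mul_sum,
        ← Finset.sum_sub_distrib, ← Finset.sum_add_distrib]
      exact Finset.sum_congr rfl fun i _ => by ring
    rw [heq]
    exact Finset.sum_nonneg fun i _ => mul_nonneg (hρ i).le
      (quadNN _ _ _ _ _ hP hD)
  nlinarith [keyA, hquad]
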